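/- Let v(x) = |x|² on ℝ^d (d ≥ 2). For every λ ∈ ℝ, δ > 0, and g ∈ H¹(ℝ^d): ∫_{E²_{λ,δ}} g² dx ≤ 2√2 δ ‖g‖_{L²}‖∇g‖_{L²} and ∫_{ℰ²_{λ,δ}} g² dx ≤ 2(1+√3) δ ‖g‖_{L²}‖∇g‖_{L²}, where E²_{λ,δ} = {x : ||x|² − λ| < δ²} and ℰ²_{λ,δ} is its open δ-neighborhood. -/

import Mathlib

open MeasureTheory Metric Set ENNReal Filter Topology


lemma helper0 {d : ℕ} (t : ℝ) (h0 : -1 ≤ t) : 1 - t^d ≤ d*(1-t) := by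
  have h := one_add_mul_le_pow (show (-2:ℝ) ≤ t - 1 by linarith) d
  have : (1 + (t-1)) = t := by ring
  rw [this] at h
  nlinarith

lemma helperIoi (d : ℕ) (hd : 1 ≤ d) {c : ℝ} (hc : 0 < c) :
    ∫⁻ s in Ioi c, ENNReal.ofReal ((s^(d+1))⁻¹) = ENNReal.ofReal ((c^d)⁻¹ / d) := by
  have hlt : (-(d+1) : ℝ) < -1 := by
    have : (1:ℝ) ≤ d := by exact_mod_cast hd
    linarith
  have hint : IntegrableOn (fun s : ℝ => s ^ (-(d+1):ℝ)) (Ioi c) :=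
    integrableOn_Ioi_rpow_of_lt hlt hc
  have hcong : ∀ s ∈ Ioi c, ENNReal.ofReal ((s^(d+1))⁻¹) = ENNReal.ofReal (s ^ (-(d+1):ℝ)) := by
    intro s hs
    have hs0 : (0:ℝ) < s := hc.trans hs
    congr 1
    rw [Real.rpow_neg hs0.le]
    norm_num
    rw [← Real.rpow_natCast s (d+1)]
    push_cast
    ring_nf
  rw [setLIntegral_congr_fun measurableSet_Ioi hcong]
  rw [← ofReal_integral_eq_lintegral_ofReal hint]
  · rw [integral_Ioi_rpow_of_lt hlt hc]
    congr 1
    have : (-(d+1):ℝ) + 1 = -(d:ℝ) := by ring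
    rw [this, Real.rpow_neg hc.le, Real.rpow_natCast]
    field_simp
  · filter_upwards [ae_restrict_mem measurableSet_Ioi] with s hs
    exact Real.rpow_nonneg (hc.trans hs).le _

lemma helperIoc (d : ℕ) (hd : 1 ≤ d) {u v : ℝ} (hu : 0 < u) (huv : u ≤ v) :
    ∫⁻ s in Ioc u v, ENNReal.ofReal ((s^(d+1))⁻¹)
      = ENNReal.ofReal ((u^d)⁻¹ / d - (v^d)⁻¹ / d) := by
  have hv : 0 < v := hu.trans_le huv
  have hlt : (-(d+1) : ℝ) < -1 := by
    have : (1:ℝ) ≤ d := by exact_mod_cast hd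
    linarith
  have hintu : IntegrableOn (fun s : ℝ => s ^ (-(d+1):ℝ)) (Ioi u) :=
    integrableOn_Ioi_rpow_of_lt hlt hu
  have hintv : IntegrableOn (fun s : ℝ => s ^ (-(d+1):ℝ)) (Ioi v) :=
    integrableOn_Ioi_rpow_of_lt hlt hv
  have hdiff : Ioc u v = Ioi u \ Ioi v := by
    rw [Set.Ioi_diff_Ioi]
  have hint : IntegrableOn (fun s : ℝ => s ^ (-(d+1):ℝ)) (Ioc u v) := by
    rw [hdiff]; exact hintu.mono_set diff_subset
  have hcong : ∀ s ∈ Ioc u v, ENNReal.ofReal ((s^(d+1))⁻¹) = ENNReal.ofReal (s ^ (-(d+1):ℝ)) := by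
    intro s hs
    have hs0 : (0:ℝ) < s := hu.trans hs.1
    congr 1
    rw [Real.rpow_neg hs0.le]
    norm_num
    rw [← Real.rpow_natCast s (d+1)]
    push_cast
    ring_nf
  rw [setLIntegral_congr_fun measurableSet_Ioc hcong]
  rw [← ofReal_integral_eq_lintegral_ofReal hint]
  · congr 1
    rw [hdiff, integral_diff measurableSet_Ioi hintu (Ioi_subset_Ioi huv),
      integral_Ioi_rpow_of_lt hlt hu, integral_Ioi_rpow_of_lt hlt hv]
    have h1 : (-(d+1):ℝ) + 1 = -(d:ℝ) := by ring
    rw [h1, Real.rpow_neg hu.le, Real.rpow_natCast, Real.rpow_neg hv.le, Real.rpow_natCast]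
    have hd0 : (0:ℝ) < d := by exact_mod_cast hd
    field_simp
  · filter_upwards [ae_restrict_mem measurableSet_Ioc] with s hs
    exact Real.rpow_nonneg (hu.trans hs.1).le _

set_option maxHeartbeats 1000000 in
lemma weight_bound (d : ℕ) (hd : 1 ≤ d) {a b r : ℝ} (ha : 0 ≤ a) (hab : a ≤ b) (hr : 0 ≤ r) :
    ENNReal.ofReal r * ∫⁻ s in Ioi (1:ℝ),
      (if s * a ≤ r ∧ r ≤ s * b then ENNReal.ofReal ((s^(d+1))⁻¹) else 0) ≤
    ENNReal.ofReal (b - a) := by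
  have hd0 : (0:ℝ) < d := by exact_mod_cast hd
  rcases hr.eq_or_lt with hr0 | hr
  · simp [← hr0]
  rcases le_or_gt b 0 with hb | hb
  · have hz : ∀ s ∈ Ioi (1:ℝ), (if s * a ≤ r ∧ r ≤ s * b then ENNReal.ofReal ((s^(d+1))⁻¹) else 0) = 0 := by
      intro s hs
      rw [if_neg]
      rintro ⟨-, h2⟩
      have hs1 : (1:ℝ) < s := hs
      nlinarith
    rw [setLIntegral_congr_fun measurableSet_Ioi hz]
    simp [sub_nonneg.2 hab]
  rcases lt_or_ge r a with hra | har
  · have ha0 : 0 < a := hr.trans hra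
    have hz : ∀ s ∈ Ioi (1:ℝ), (if s * a ≤ r ∧ r ≤ s * b then ENNReal.ofReal ((s^(d+1))⁻¹) else 0) = 0 := by
      intro s hs
      rw [if_neg]
      rintro ⟨h1, -⟩
      have hs1 : (1:ℝ) < s := hs
      nlinarith
    rw [setLIntegral_congr_fun measurableSet_Ioi hz]
    simp [sub_nonneg.2 hab]
  -- main case
  set S : Set ℝ := {s : ℝ | s * a ≤ r ∧ r ≤ s * b} with hS
  have hSm : MeasurableSet S :=
    (measurableSet_le (measurable_id.mul_const a) measurable_const).inter
      (measurableSet_le measurable_const (measurable_id.mul_const b))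
  have hred : (∫⁻ s in Ioi (1:ℝ),
      (if s * a ≤ r ∧ r ≤ s * b then ENNReal.ofReal ((s^(d+1))⁻¹) else 0))
      = ∫⁻ s in S ∩ Ioi 1, ENNReal.ofReal ((s^(d+1))⁻¹) := by
    rw [← Measure.restrict_restrict hSm, ← lintegral_indicator hSm]
    apply lintegral_congr
    intro s
    by_cases h : s * a ≤ r ∧ r ≤ s * b
    · rw [if_pos h]; exact (Set.indicator_of_mem (show s ∈ S from h) (fun s => ENNReal.ofReal ((s^(d+1))⁻¹))).symm
    · rw [if_neg h]; exact (Set.indicator_of_notMem (show s ∉ S from h) (fun s => ENNReal.ofReal ((s^(d+1))⁻¹))).symm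
  rw [hred]
  set u : ℝ := max 1 (r/b) with hu
  have hu0 : (0:ℝ) < u := lt_of_lt_of_le one_pos (le_max_left _ _)
  have hu1 : (1:ℝ) ≤ u := le_max_left _ _
  -- generic bound step for the final multiplication
  have mulstep : ∀ J : ℝ, (∫⁻ s in S ∩ Ioi 1, ENNReal.ofReal ((s^(d+1))⁻¹)) ≤ ENNReal.ofReal J →
      r * J ≤ b - a → ENNReal.ofReal r * (∫⁻ s in S ∩ Ioi 1, ENNReal.ofReal ((s^(d+1))⁻¹)) ≤ ENNReal.ofReal (b - a) := by
    intro J hJ hrJ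
    calc ENNReal.ofReal r * (∫⁻ s in S ∩ Ioi 1, ENNReal.ofReal ((s^(d+1))⁻¹))
        ≤ ENNReal.ofReal r * ENNReal.ofReal J := by gcongr
      _ = ENNReal.ofReal (r * J) := (ENNReal.ofReal_mul hr.le).symm
      _ ≤ ENNReal.ofReal (b - a) := ENNReal.ofReal_le_ofReal hrJ
  rcases ha.eq_or_lt with ha0 | ha0
  · -- a = 0
    have hsub : S ∩ Ioi 1 ⊆ Ici u := by
      rintro s ⟨⟨-, h2⟩, hs1⟩
      have hs1' : (1:ℝ) < s := hs1
      refine max_le hs1'.le ?_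
      rw [div_le_iff₀ hb]
      exact h2
    have hle : (∫⁻ s in S ∩ Ioi 1, ENNReal.ofReal ((s^(d+1))⁻¹)) ≤ ENNReal.ofReal ((u^d)⁻¹ / d) := by
      refine le_trans (lintegral_mono_set hsub) ?_
      rw [← restrict_Ioi_eq_restrict_Ici]
      exact le_of_eq (helperIoi d hd hu0)
    refine mulstep _ hle ?_
    rw [← ha0]
    -- r * ((u^d)⁻¹/d) ≤ b - 0
    rcases le_total r b with hrb | hbr
    · have h1 : (u^d)⁻¹ ≤ 1 := by
        rw [inv_le_one_iff₀]
        right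
        exact one_le_pow₀ hu1
      have h2 : (u^d)⁻¹ / d ≤ 1 := by
        apply div_le_one_of_le₀ (le_trans h1 (by exact_mod_cast hd)) hd0.le
      nlinarith
    · have huval : u = r / b := max_eq_right ((le_div_iff₀ hb).2 (by linarith))
      obtain ⟨e, rfl⟩ : ∃ e, d = e + 1 := ⟨d - 1, by omega⟩
      have hwle : b / r ≤ 1 := (div_le_one hr).2 hbr
      have hw0 : 0 < b / r := div_pos hb hr
      have hinv : (u ^ (e+1))⁻¹ = (b/r)^(e+1) := by
        rw [huval, ← inv_pow, inv_div]
      rw [hinv, sub_zero]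
      have key : r * (b/r)^(e+1) = (b/r)^e * b := by
        rw [pow_succ, mul_comm r, mul_assoc, div_mul_cancel₀ _ hr.ne']
      have h3 : (b/r)^e ≤ 1 := pow_le_one₀ hw0.le hwle
      have h4 : r * ((b/r)^(e+1) / (e+1:ℕ)) ≤ r * (b/r)^(e+1) := by
        apply mul_le_mul_of_nonneg_left _ hr.le
        apply div_le_self (by positivity)
        exact_mod_cast hd
      calc r * ((b/r)^(e+1) / ((e+1:ℕ):ℝ)) ≤ r * (b/r)^(e+1) := h4
        _ = (b/r)^e * b := key
        _ ≤ 1 * b := by nlinarith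
        _ = b := one_mul b
  · -- a > 0
    set v : ℝ := r / a with hv
    have hv1 : 1 ≤ v := (le_div_iff₀ ha0).2 (by linarith)
    have hsub : S ∩ Ioi 1 ⊆ Icc u v := by
      rintro s ⟨⟨h1, h2⟩, hs1⟩
      have hs1' : (1:ℝ) < s := hs1
      constructor
      · refine max_le hs1'.le ?_
        rw [div_le_iff₀ hb]
        exact h2
      · rw [hv, le_div_iff₀ ha0]
        exact h1
    rcases lt_or_ge v u with hvu | huv
    · have : S ∩ Ioi 1 ⊆ (∅ : Set ℝ) := by
        rw [← Icc_eq_empty (not_le.2 hvu)]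
        exact hsub
      have hle : (∫⁻ s in S ∩ Ioi 1, ENNReal.ofReal ((s^(d+1))⁻¹)) ≤ 0 := by
        refine le_trans (lintegral_mono_set this) ?_
        simp
      refine mulstep 0 (by simpa using hle) ?_
      simp [sub_nonneg.2 hab]
    · have hle : (∫⁻ s in S ∩ Ioi 1, ENNReal.ofReal ((s^(d+1))⁻¹))
          ≤ ENNReal.ofReal ((u^d)⁻¹ / d - (v^d)⁻¹ / d) := by
        refine le_trans (lintegral_mono_set hsub) ?_
        rw [← Measure.restrict_congr_set Ioc_ae_eq_Icc]
        exact le_of_eq (helperIoc d hd hu0 huv)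
      refine mulstep _ hle ?_
      have hvinv : (v^d)⁻¹ = (a/r)^d := by rw [hv, ← inv_pow, inv_div]
      rcases le_total r b with hrb | hbr
      · have huval : u = 1 := max_eq_left ((div_le_one hb).2 hrb)
        rw [huval, hvinv, one_pow, inv_one]
        have ht0 : (0:ℝ) ≤ a/r := by positivity
        have hh := helper0 (d := d) (a/r) (by linarith)
        have k2 : (1 - (a/r)^d)/d ≤ 1 - a/r := by
          rw [div_le_iff₀ hd0]
          nlinarith
        have k3 : r * (1 - a/r) = r - a := by field_simp
        have k4 : r * ((1 - (a/r)^d)/d) ≤ r * (1 - a/r) :=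
          mul_le_mul_of_nonneg_left k2 hr.le
        have k5 : 1/(d:ℝ) - (a/r)^d/d = (1 - (a/r)^d)/d := by ring
        rw [k5]
        linarith
      · have huval : u = r / b := max_eq_right ((le_div_iff₀ hb).2 (by linarith))
        have huinv : (u^d)⁻¹ = (b/r)^d := by rw [huval, ← inv_pow, inv_div]
        rw [huinv, hvinv]
        obtain ⟨e, rfl⟩ : ∃ e, d = e + 1 := ⟨d - 1, by omega⟩
        set w : ℝ := b / r with hwdef
        set t : ℝ := a / r with htdef
        have hw0 : 0 < w := div_pos hb hr
        have hw1 : w ≤ 1 := (div_le_one hr).2 hbr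
        have ht0 : 0 ≤ t := by positivity
        have htw : t ≤ w := by
          rw [htdef, hwdef]
          gcongr
        have hwne : w ≠ 0 := hw0.ne'
        have hh := helper0 (d := e+1) (t/w) (le_trans (by norm_num : (-1:ℝ) ≤ 0) (by positivity))
        have key1 : w^(e+1) - t^(e+1) ≤ ((e+1:ℕ):ℝ) * w^e * (w - t) := by
          have hmul := mul_le_mul_of_nonneg_left hh (pow_nonneg hw0.le (e+1))
          have e1 : w^(e+1) * (1 - (t/w)^(e+1)) = w^(e+1) - t^(e+1) := by
            rw [mul_sub, mul_one, ← mul_pow, mul_div_cancel₀ _ hwne]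
          have e2 : w^(e+1) * (((e+1:ℕ):ℝ)*(1 - t/w)) = ((e+1:ℕ):ℝ) * w^e * (w - t) := by
            push_cast
            field_simp
            ring
          rw [e1, e2] at hmul
          exact hmul
        have k5 : w^(e+1)/(((e+1:ℕ):ℝ)) - t^(e+1)/(((e+1:ℕ):ℝ)) = (w^(e+1) - t^(e+1))/(((e+1:ℕ):ℝ)) := by
          ring
        have hN : (0:ℝ) < ((e+1:ℕ):ℝ) := by positivity
        have k6 : (w^(e+1) - t^(e+1))/(((e+1:ℕ):ℝ)) ≤ w^e * (w - t) :=
          (div_le_iff₀ hN).mpr (by nlinarith [key1])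
        have hwt : w - t = (b - a)/r := by rw [hwdef, htdef, sub_div]
        have k7 : r * (w^e * (w - t)) = w^e * (b - a) := by
          rw [hwt, mul_comm r, mul_assoc, div_mul_cancel₀ _ hr.ne']
        have k8 : w^e ≤ 1 := pow_le_one₀ hw0.le hw1
        have k9 : r * ((w^(e+1) - t^(e+1))/(((e+1:ℕ):ℝ))) ≤ r * (w^e * (w - t)) :=
          mul_le_mul_of_nonneg_left k6 hr.le
        have k10 : w^e * (b - a) ≤ b - a := by nlinarith [sub_nonneg.2 hab, pow_nonneg hw0.le e]
        calc r * (w^(e+1)/(((e+1:ℕ):ℝ)) - t^(e+1)/(((e+1:ℕ):ℝ)))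
            = r * ((w^(e+1) - t^(e+1))/(((e+1:ℕ):ℝ))) := by rw [k5]
          _ ≤ r * (w^e * (w - t)) := k9
          _ = w^e * (b - a) := k7
          _ ≤ b - a := k10

lemma lint_smul {d : ℕ} (f : EuclideanSpace ℝ (Fin d) → ℝ≥0∞) (hf : Measurable f) {s : ℝ}
    (hs : 0 < s) :
    ∫⁻ x, f (s • x) = ENNReal.ofReal ((s ^ d)⁻¹) * ∫⁻ x, f x := by
  have h1 : ∫⁻ x, f (s • x) ∂(volume : Measure (EuclideanSpace ℝ (Fin d)))
      = ∫⁻ y, f y ∂(Measure.map (fun x => s • x) volume) :=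
    (lintegral_map hf (measurable_const_smul s)).symm
  rw [h1, Measure.map_addHaar_smul volume hs.ne', lintegral_smul_measure,
    finrank_euclideanSpace_fin]
  congr 2
  rw [abs_of_nonneg (by positivity)]

lemma ptwise {d : ℕ} {g : EuclideanSpace ℝ (Fin d) → ℝ} (hgdiff : Differentiable ℝ g)
    (x : EuclideanSpace ℝ (Fin d))
    (hfin : (∫⁻ s in Ioi (1:ℝ), ENNReal.ofReal ((g (s • x))^2)) ≠ ⊤) :
    ENNReal.ofReal ((g x)^2) ≤
      ∫⁻ s in Ioi (1:ℝ), ENNReal.ofReal (2 * |g (s • x)| * ‖fderiv ℝ g (s • x)‖ * ‖x‖) := by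
  by_cases htop : (∫⁻ s in Ioi (1:ℝ),
      ENNReal.ofReal (2 * |g (s • x)| * ‖fderiv ℝ g (s • x)‖ * ‖x‖)) = ⊤
  · rw [htop]; exact le_top
  have hg_meas : Measurable g := hgdiff.continuous.measurable
  have hsm : Measurable (fun s : ℝ => s • x) := (continuous_id.smul continuous_const).measurable
  set φ : ℝ → ℝ := fun s => 2 * |g (s • x)| * ‖fderiv ℝ g (s • x)‖ * ‖x‖ with hφ
  have hφm : Measurable φ :=
    ((measurable_const.mul (hg_meas.comp hsm).abs).mul
      (((measurable_fderiv ℝ g).comp hsm).norm)).mul measurable_const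
  have hφnn : ∀ s, 0 ≤ φ s := fun s => by positivity
  have hφint : IntegrableOn φ (Ioi (1:ℝ)) := by
    refine ⟨hφm.aestronglyMeasurable, ?_⟩
    rw [hasFiniteIntegral_iff_ofReal (ae_of_all _ hφnn)]
    exact lt_top_iff_ne_top.2 htop
  set F : ℝ → ℝ := fun s => (g (s • x))^2 with hF
  set F' : ℝ → ℝ := fun s => 2 * g (s • x) * ((fderiv ℝ g (s • x)) x) with hF'
  have hFd : ∀ s : ℝ, HasDerivAt F (F' s) s := by
    intro s
    have h1 : HasDerivAt (fun s : ℝ => s • x) x s := by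
      simpa using (hasDerivAt_id s).smul_const x
    have h2 : HasDerivAt (fun s : ℝ => g (s • x)) ((fderiv ℝ g (s • x)) x) s :=
      (hgdiff (s • x)).hasFDerivAt.comp_hasDerivAt s h1
    have h3 := h2.fun_pow 2
    convert h3 using 1
    · rfl
    · rfl
    push_cast [hF']
    ring
  have hF'm : Measurable F' :=
    (measurable_const.mul (hg_meas.comp hsm)).mul
      ((measurable_fderiv_apply_const (𝕜 := ℝ) (f := g) x).comp hsm)
  have hbound : ∀ s, |F' s| ≤ φ s := by
    intro s
    calc |2 * g (s • x) * ((fderiv ℝ g (s • x)) x)|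
        = 2 * |g (s • x)| * |(fderiv ℝ g (s • x)) x| := by
          rw [abs_mul, abs_mul, abs_two]
      _ ≤ 2 * |g (s • x)| * (‖fderiv ℝ g (s • x)‖ * ‖x‖) := by
          gcongr
          exact (fderiv ℝ g (s • x)).le_opNorm x
      _ = φ s := by rw [hφ]; ring
  have hF'int : IntegrableOn F' (Ioi (1:ℝ)) := by
    refine Integrable.mono hφint hF'm.aestronglyMeasurable (ae_of_all _ fun s => ?_)
    rw [Real.norm_eq_abs, Real.norm_eq_abs, abs_of_nonneg (hφnn s)]
    exact hbound s
  have key : ∀ t : ℝ, 1 ≤ t → ∫ s in (1:ℝ)..t, F' s = F t - F 1 := by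
    intro t ht
    refine intervalIntegral.integral_eq_sub_of_hasDerivAt (fun s _ => hFd s) ?_
    rw [intervalIntegrable_iff_integrableOn_Ioc_of_le ht]
    exact hF'int.mono_set Set.Ioc_subset_Ioi_self
  have hlim : Tendsto (fun t => ∫ s in (1:ℝ)..t, F' s) atTop (𝓝 (∫ s in Ioi (1:ℝ), F' s)) :=
    intervalIntegral_tendsto_integral_Ioi 1 hF'int tendsto_id
  have hFlim : Tendsto F atTop (𝓝 (F 1 + ∫ s in Ioi (1:ℝ), F' s)) := by
    refine Tendsto.congr' ?_ (tendsto_const_nhds.add hlim)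
    filter_upwards [eventually_ge_atTop (1:ℝ)] with t ht
    rw [key t ht]
    ring
  set L : ℝ := F 1 + ∫ s in Ioi (1:ℝ), F' s with hLdef
  have hL0 : 0 ≤ L := ge_of_tendsto' hFlim (fun t => sq_nonneg _)
  have hL1 : L ≤ 0 := by
    by_contra hpos
    push_neg at hpos
    obtain ⟨T, hT⟩ := eventually_atTop.1 (hFlim.eventually (eventually_gt_nhds (half_lt_self hpos)))
    have h1 : ∫⁻ s in Ioi (max T 1), ENNReal.ofReal (L/2) ≤
        ∫⁻ s in Ioi (max T 1), ENNReal.ofReal (F s) := by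
      refine lintegral_mono_ae ?_
      filter_upwards [ae_restrict_mem measurableSet_Ioi] with s hs
      exact ENNReal.ofReal_le_ofReal (hT s (le_trans (le_max_left T 1) hs.le)).le
    have h2 : ∫⁻ s in Ioi (max T 1), ENNReal.ofReal (F s) ≤
        ∫⁻ s in Ioi (1:ℝ), ENNReal.ofReal (F s) :=
      lintegral_mono_set (Ioi_subset_Ioi (le_max_right T 1))
    rw [setLIntegral_const, Real.volume_Ioi, ENNReal.mul_top
      (by simpa using (by linarith : (0:ℝ) < L/2))] at h1
    exact hfin (top_le_iff.1 (le_trans h1 h2))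
  have hLz : L = 0 := le_antisymm hL1 hL0
  have hF1 : F 1 = - ∫ s in Ioi (1:ℝ), F' s := by
    have := hLdef ▸ hLz
    linarith [this]
  have hchain : F 1 ≤ ∫ s in Ioi (1:ℝ), φ s := by
    rw [hF1]
    calc - ∫ s in Ioi (1:ℝ), F' s ≤ |∫ s in Ioi (1:ℝ), F' s| := neg_le_abs _
      _ ≤ ∫ s in Ioi (1:ℝ), |F' s| := by
          simpa [Real.norm_eq_abs] using norm_integral_le_integral_norm (μ := volume.restrict (Ioi (1:ℝ))) F'
      _ ≤ ∫ s in Ioi (1:ℝ), φ s := integral_mono hF'int.abs hφint hbound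
  have hgx : (g x)^2 = F 1 := by rw [hF]; simp
  rw [hgx]
  calc ENNReal.ofReal (F 1) ≤ ENNReal.ofReal (∫ s in Ioi (1:ℝ), φ s) :=
        ENNReal.ofReal_le_ofReal hchain
    _ = ∫⁻ s in Ioi (1:ℝ), ENNReal.ofReal (φ s) :=
        ofReal_integral_eq_lintegral_ofReal hφint (ae_of_all _ hφnn)

lemma aefin {d : ℕ} (hd : 2 ≤ d) {g : EuclideanSpace ℝ (Fin d) → ℝ} (hgm : Measurable g)
    (hg2 : (∫⁻ x, ENNReal.ofReal ((g x)^2)) ≠ ⊤) :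
    ∀ᵐ x : EuclideanSpace ℝ (Fin d),
      (∫⁻ s in Ioi (1:ℝ), ENNReal.ofReal ((g (s • x))^2)) ≠ ⊤ := by
  have hjm : Measurable (fun p : EuclideanSpace ℝ (Fin d) × ℝ => ENNReal.ofReal ((g (p.2 • p.1))^2)) := by
    apply ENNReal.measurable_ofReal.comp
    exact ((hgm.comp (continuous_snd.smul continuous_fst).measurable)).pow_const 2
  have hmeas : Measurable (fun x : EuclideanSpace ℝ (Fin d) =>
      ∫⁻ s in Ioi (1:ℝ), ENNReal.ofReal ((g (s • x))^2)) :=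
    Measurable.lintegral_prod_right'
      (ν := volume.restrict (Ioi (1:ℝ)))
      (f := fun p : EuclideanSpace ℝ (Fin d) × ℝ => ENNReal.ofReal ((g (p.2 • p.1))^2)) hjm
  have hswap : ∫⁻ x, (∫⁻ s in Ioi (1:ℝ), ENNReal.ofReal ((g (s • x))^2))
      = ∫⁻ s in Ioi (1:ℝ), ∫⁻ x, ENNReal.ofReal ((g (s • x))^2) :=
    lintegral_lintegral_swap hjm.aemeasurable
  have hper : ∀ s ∈ Ioi (1:ℝ), (∫⁻ x, ENNReal.ofReal ((g (s • x))^2))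
      = ENNReal.ofReal ((s ^ d)⁻¹) * ∫⁻ x, ENNReal.ofReal ((g x)^2) := by
    intro s hs
    exact lint_smul (fun y => ENNReal.ofReal ((g y)^2))
      (ENNReal.measurable_ofReal.comp (hgm.pow_const 2)) (lt_trans one_pos hs)
  have htot : (∫⁻ x, (∫⁻ s in Ioi (1:ℝ), ENNReal.ofReal ((g (s • x))^2))) ≠ ⊤ := by
    rw [hswap, setLIntegral_congr_fun measurableSet_Ioi hper]
    rw [lintegral_mul_const' _ _ hg2]
    refine ENNReal.mul_ne_top ?_ hg2
    have hb : ∀ s ∈ Ioi (1:ℝ), ENNReal.ofReal ((s ^ d)⁻¹) ≤ ENNReal.ofReal ((s^(1+1))⁻¹) := by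
      intro s hs
      have hs1 : (1:ℝ) ≤ s := (le_of_lt hs)
      apply ENNReal.ofReal_le_ofReal
      apply inv_anti₀ (by positivity)
      exact pow_le_pow_right₀ hs1 hd
    have := helperIoi 1 le_rfl (zero_lt_one (α := ℝ))
    have hle : (∫⁻ s in Ioi (1:ℝ), ENNReal.ofReal ((s ^ d)⁻¹)) ≤ ENNReal.ofReal (((1:ℝ)^1)⁻¹ / ((1:ℕ):ℝ)) := by
      rw [← this]
      exact setLIntegral_mono_ae (by fun_prop) (ae_of_all _ hb)
    exact ne_top_of_le_ne_top (by simp) hle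
  filter_upwards [ae_lt_top hmeas htot] with x hx
  exact hx.ne

set_option maxHeartbeats 1000000 in
lemma annulus_est {d : ℕ} (hd : 2 ≤ d) {a b : ℝ} (ha : 0 ≤ a) (hab : a ≤ b)
    {g : EuclideanSpace ℝ (Fin d) → ℝ} (hgdiff : Differentiable ℝ g)
    (hg2 : MemLp g 2 volume) (hg'2 : MemLp (fun x => ‖fderiv ℝ g x‖) 2 volume) :
    ∫ x in {x : EuclideanSpace ℝ (Fin d) | a ≤ ‖x‖ ∧ ‖x‖ ≤ b}, (g x)^2 ≤
      2 * (b - a) * Real.sqrt (∫ x, (g x)^2) * Real.sqrt (∫ x, ‖fderiv ℝ g x‖^2) := by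
  have hd1 : 1 ≤ d := le_trans one_le_two hd
  have hgm : Measurable g := hgdiff.continuous.measurable
  have hDm : Measurable (fderiv ℝ g) := measurable_fderiv ℝ g
  have hg2i : Integrable (fun x : EuclideanSpace ℝ (Fin d) => (g x)^2) := hg2.integrable_sq
  have hg'2i : Integrable (fun x : EuclideanSpace ℝ (Fin d) => ‖fderiv ℝ g x‖^2) :=
    hg'2.integrable_sq
  set P : ℝ := ∫ x, (g x)^2 with hPdef
  set Q : ℝ := ∫ x, ‖fderiv ℝ g x‖^2 with hQdef
  have hP0 : 0 ≤ P := integral_nonneg (fun x => sq_nonneg _)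
  have hQ0 : 0 ≤ Q := integral_nonneg (fun x => sq_nonneg _)
  have hLP : (∫⁻ x, ENNReal.ofReal ((g x)^2)) = ENNReal.ofReal P :=
    (ofReal_integral_eq_lintegral_ofReal hg2i (ae_of_all _ fun x => sq_nonneg _)).symm
  have hLQ : (∫⁻ x, ENNReal.ofReal (‖fderiv ℝ g x‖^2)) = ENNReal.ofReal Q :=
    (ofReal_integral_eq_lintegral_ofReal hg'2i (ae_of_all _ fun x => sq_nonneg _)).symm
  set A : Set (EuclideanSpace ℝ (Fin d)) := {x | a ≤ ‖x‖ ∧ ‖x‖ ≤ b} with hAdef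
  have hAm : MeasurableSet A :=
    (measurableSet_le measurable_const measurable_norm).inter
      (measurableSet_le measurable_norm measurable_const)
  -- the main lintegral estimate
  have claim : (∫⁻ x in A, ENNReal.ofReal ((g x)^2)) ≤
      ENNReal.ofReal (2 * (b - a) * Real.sqrt P * Real.sqrt Q) := by
    set G : EuclideanSpace ℝ (Fin d) → ℝ≥0∞ :=
      fun y => ENNReal.ofReal (2 * |g y| * ‖fderiv ℝ g y‖) with hGdef
    have hGm : Measurable G := by
      apply ENNReal.measurable_ofReal.comp
      exact (measurable_const.mul hgm.abs).mul hDm.norm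
    set T : ℝ → EuclideanSpace ℝ (Fin d) → ℝ≥0∞ :=
      fun s y => G y * ENNReal.ofReal ‖y‖ * (if s * a ≤ ‖y‖ ∧ ‖y‖ ≤ s * b then 1 else 0)
        with hTdef
    have hTm : ∀ s, Measurable (T s) := by
      intro s
      apply (hGm.mul (ENNReal.measurable_ofReal.comp measurable_norm)).mul
      exact Measurable.ite ((measurableSet_le measurable_const measurable_norm).inter
        (measurableSet_le measurable_norm measurable_const)) measurable_const measurable_const
    -- step 1
    have step1 : (∫⁻ x in A, ENNReal.ofReal ((g x)^2)) ≤
        ∫⁻ x in A, ∫⁻ s in Ioi (1:ℝ),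
          ENNReal.ofReal (2 * |g (s • x)| * ‖fderiv ℝ g (s • x)‖ * ‖x‖) := by
      refine lintegral_mono_ae (ae_restrict_of_ae ?_)
      have hfin := aefin hd hgm (by rw [hLP]; exact ENNReal.ofReal_ne_top)
      filter_upwards [hfin] with x hx
      exact ptwise hgdiff x hx
    -- step 2 : insert indicator
    have step2 : (∫⁻ x in A, ∫⁻ s in Ioi (1:ℝ),
          ENNReal.ofReal (2 * |g (s • x)| * ‖fderiv ℝ g (s • x)‖ * ‖x‖))
        = ∫⁻ x, ∫⁻ s in Ioi (1:ℝ),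
            (if a ≤ ‖x‖ ∧ ‖x‖ ≤ b then
              ENNReal.ofReal (2 * |g (s • x)| * ‖fderiv ℝ g (s • x)‖ * ‖x‖) else 0) := by
      rw [← lintegral_indicator hAm]
      apply lintegral_congr
      intro x
      by_cases hx : a ≤ ‖x‖ ∧ ‖x‖ ≤ b
      · rw [Set.indicator_of_mem (show x ∈ A from hx)]
        apply lintegral_congr
        intro s
        rw [if_pos hx]
      · rw [Set.indicator_of_notMem (show x ∉ A from hx)]
        symm
        calc (∫⁻ s in Ioi (1:ℝ), (if a ≤ ‖x‖ ∧ ‖x‖ ≤ b then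
              ENNReal.ofReal (2 * |g (s • x)| * ‖fderiv ℝ g (s • x)‖ * ‖x‖) else 0))
            = ∫⁻ _ in Ioi (1:ℝ), 0 := by
              apply lintegral_congr
              intro s
              rw [if_neg hx]
          _ = 0 := lintegral_zero
    -- step 3 : swap
    have hJm : Measurable (fun p : EuclideanSpace ℝ (Fin d) × ℝ =>
        (if a ≤ ‖p.1‖ ∧ ‖p.1‖ ≤ b then
          ENNReal.ofReal (2 * |g (p.2 • p.1)| * ‖fderiv ℝ g (p.2 • p.1)‖ * ‖p.1‖) else 0)) := by
      have hsmul : Measurable (fun p : EuclideanSpace ℝ (Fin d) × ℝ => p.2 • p.1) :=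
        (continuous_snd.smul continuous_fst).measurable
      refine Measurable.ite ?_ ?_ measurable_const
      · exact (measurableSet_le measurable_const measurable_fst.norm).inter
          (measurableSet_le measurable_fst.norm measurable_const)
      · apply ENNReal.measurable_ofReal.comp
        exact ((measurable_const.mul (hgm.comp hsmul).abs).mul
          ((hDm.comp hsmul).norm)).mul measurable_fst.norm
    have step3 : (∫⁻ x, ∫⁻ s in Ioi (1:ℝ),
          (if a ≤ ‖x‖ ∧ ‖x‖ ≤ b then
            ENNReal.ofReal (2 * |g (s • x)| * ‖fderiv ℝ g (s • x)‖ * ‖x‖) else 0))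
        = ∫⁻ s in Ioi (1:ℝ), ∫⁻ x,
            (if a ≤ ‖x‖ ∧ ‖x‖ ≤ b then
              ENNReal.ofReal (2 * |g (s • x)| * ‖fderiv ℝ g (s • x)‖ * ‖x‖) else 0) :=
      lintegral_lintegral_swap hJm.aemeasurable
    -- step 4 : change of variables per s
    have step4 : ∀ s ∈ Ioi (1:ℝ), (∫⁻ x,
          (if a ≤ ‖x‖ ∧ ‖x‖ ≤ b then
            ENNReal.ofReal (2 * |g (s • x)| * ‖fderiv ℝ g (s • x)‖ * ‖x‖) else 0))
        = ENNReal.ofReal ((s^(d+1))⁻¹) * ∫⁻ y, T s y := by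
      intro s hs
      have hs0 : (0:ℝ) < s := lt_trans one_pos hs
      have hkey : ∀ x, T s (s • x) = ENNReal.ofReal s *
          (if a ≤ ‖x‖ ∧ ‖x‖ ≤ b then
            ENNReal.ofReal (2 * |g (s • x)| * ‖fderiv ℝ g (s • x)‖ * ‖x‖) else 0) := by
        intro x
        have hnorm : ‖s • x‖ = s * ‖x‖ := by
          rw [norm_smul, Real.norm_eq_abs, abs_of_pos hs0]
        have hcond : (s * a ≤ ‖s • x‖ ∧ ‖s • x‖ ≤ s * b) ↔ (a ≤ ‖x‖ ∧ ‖x‖ ≤ b) := by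
          rw [hnorm]
          constructor
          · rintro ⟨h1, h2⟩
            exact ⟨le_of_mul_le_mul_left h1 hs0, le_of_mul_le_mul_left h2 hs0⟩
          · rintro ⟨h1, h2⟩
            exact ⟨mul_le_mul_of_nonneg_left h1 hs0.le, mul_le_mul_of_nonneg_left h2 hs0.le⟩
        rw [hTdef]
        simp only
        by_cases hx : a ≤ ‖x‖ ∧ ‖x‖ ≤ b
        · rw [if_pos (hcond.2 hx), if_pos hx, mul_one, hnorm]
          rw [← ENNReal.ofReal_mul (by positivity), ← ENNReal.ofReal_mul (by positivity)]
          congr 1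
          ring
        · rw [if_neg (fun h => hx (hcond.1 h)), if_neg hx, mul_zero, mul_zero]
      have hTs : (∫⁻ x, T s (s • x)) = ENNReal.ofReal ((s^d)⁻¹) * ∫⁻ y, T s y :=
        lint_smul (T s) (hTm s) hs0
      have hpull : (∫⁻ x, T s (s • x)) = ENNReal.ofReal s * ∫⁻ x,
          (if a ≤ ‖x‖ ∧ ‖x‖ ≤ b then
            ENNReal.ofReal (2 * |g (s • x)| * ‖fderiv ℝ g (s • x)‖ * ‖x‖) else 0) := by
        rw [← lintegral_const_mul' _ _ ENNReal.ofReal_ne_top]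
        exact lintegral_congr hkey
      have hsne : ENNReal.ofReal s ≠ 0 := by
        simp [ENNReal.ofReal_eq_zero]
        linarith
      have := hpull.symm.trans hTs
      calc (∫⁻ x, (if a ≤ ‖x‖ ∧ ‖x‖ ≤ b then
              ENNReal.ofReal (2 * |g (s • x)| * ‖fderiv ℝ g (s • x)‖ * ‖x‖) else 0))
          = (ENNReal.ofReal s)⁻¹ * (ENNReal.ofReal s * ∫⁻ x,
              (if a ≤ ‖x‖ ∧ ‖x‖ ≤ b then
                ENNReal.ofReal (2 * |g (s • x)| * ‖fderiv ℝ g (s • x)‖ * ‖x‖) else 0)) := by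
            rw [← mul_assoc, ENNReal.inv_mul_cancel hsne ENNReal.ofReal_ne_top, one_mul]
        _ = (ENNReal.ofReal s)⁻¹ * (ENNReal.ofReal ((s^d)⁻¹) * ∫⁻ y, T s y) := by rw [this]
        _ = ENNReal.ofReal ((s^(d+1))⁻¹) * ∫⁻ y, T s y := by
            rw [← mul_assoc, ← ENNReal.ofReal_inv_of_pos hs0,
              ← ENNReal.ofReal_mul (by positivity)]
            congr 2
            rw [pow_succ, mul_inv]
            ring
    -- step 5 : push constant inside and swap back
    set K : ℝ → EuclideanSpace ℝ (Fin d) → ℝ≥0∞ := fun s y =>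
      (if s * a ≤ ‖y‖ ∧ ‖y‖ ≤ s * b then ENNReal.ofReal ((s^(d+1))⁻¹) else 0) with hKdef
    have hmix : ∀ s y, ENNReal.ofReal ((s^(d+1))⁻¹) * T s y
        = (G y * ENNReal.ofReal ‖y‖) * K s y := by
      intro s y
      rw [hTdef, hKdef]
      simp only
      by_cases hc : s * a ≤ ‖y‖ ∧ ‖y‖ ≤ s * b
      · rw [if_pos hc, if_pos hc]
        ring
      · rw [if_neg hc, if_neg hc]
        ring
    have hJ2m : Measurable (fun p : ℝ × EuclideanSpace ℝ (Fin d) =>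
        ENNReal.ofReal ((p.1^(d+1))⁻¹) * T p.1 p.2) := by
      have h1 : Measurable (fun p : ℝ × EuclideanSpace ℝ (Fin d) =>
          ENNReal.ofReal ((p.1^(d+1))⁻¹)) := by fun_prop
      apply h1.mul
      apply Measurable.mul
      · refine Measurable.mul (f := fun p : ℝ × EuclideanSpace ℝ (Fin d) => G p.2)
          (g := fun p : ℝ × EuclideanSpace ℝ (Fin d) => ENNReal.ofReal ‖p.2‖) ?_ ?_
        · exact hGm.comp measurable_snd
        · exact ENNReal.measurable_ofReal.comp measurable_snd.norm
      · refine Measurable.ite ?_ measurable_const measurable_const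
        exact (measurableSet_le (measurable_fst.mul_const a) measurable_snd.norm).inter
          (measurableSet_le measurable_snd.norm (measurable_fst.mul_const b))
    have step5 : (∫⁻ s in Ioi (1:ℝ), ENNReal.ofReal ((s^(d+1))⁻¹) * ∫⁻ y, T s y)
        = ∫⁻ y, (G y * ENNReal.ofReal ‖y‖) * ∫⁻ s in Ioi (1:ℝ), K s y := by
      calc (∫⁻ s in Ioi (1:ℝ), ENNReal.ofReal ((s^(d+1))⁻¹) * ∫⁻ y, T s y)
          = ∫⁻ s in Ioi (1:ℝ), ∫⁻ y, ENNReal.ofReal ((s^(d+1))⁻¹) * T s y := by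
            apply lintegral_congr
            intro s
            exact (lintegral_const_mul' _ _ ENNReal.ofReal_ne_top).symm
        _ = ∫⁻ y, ∫⁻ s in Ioi (1:ℝ), ENNReal.ofReal ((s^(d+1))⁻¹) * T s y :=
            lintegral_lintegral_swap hJ2m.aemeasurable
        _ = ∫⁻ y, (G y * ENNReal.ofReal ‖y‖) * ∫⁻ s in Ioi (1:ℝ), K s y := by
            apply lintegral_congr
            intro y
            rw [← lintegral_const_mul' _ _
              (ENNReal.mul_ne_top ENNReal.ofReal_ne_top ENNReal.ofReal_ne_top)]
            apply lintegral_congr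
            intro s
            exact hmix s y
    -- step 6 : weight bound
    have step6 : (∫⁻ y, (G y * ENNReal.ofReal ‖y‖) * ∫⁻ s in Ioi (1:ℝ), K s y)
        ≤ ENNReal.ofReal (b - a) * ∫⁻ y, G y := by
      have hper : ∀ y : EuclideanSpace ℝ (Fin d),
          (G y * ENNReal.ofReal ‖y‖) * (∫⁻ s in Ioi (1:ℝ), K s y) ≤
            G y * ENNReal.ofReal (b - a) := by
        intro y
        rw [mul_assoc]
        exact mul_le_mul_right (weight_bound d hd1 ha hab (norm_nonneg y)) (G y)
      calc (∫⁻ y, (G y * ENNReal.ofReal ‖y‖) * ∫⁻ s in Ioi (1:ℝ), K s y)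
          ≤ ∫⁻ y, G y * ENNReal.ofReal (b - a) := lintegral_mono hper
        _ = (∫⁻ y, G y) * ENNReal.ofReal (b - a) :=
            lintegral_mul_const' _ _ ENNReal.ofReal_ne_top
        _ = ENNReal.ofReal (b - a) * ∫⁻ y, G y := mul_comm _ _
    -- step 7 : Cauchy-Schwarz
    have step7 : (∫⁻ y, G y) ≤ ENNReal.ofReal 2 *
        (ENNReal.ofReal P ^ ((1:ℝ)/2) * ENNReal.ofReal Q ^ ((1:ℝ)/2)) := by
      set f1 : EuclideanSpace ℝ (Fin d) → ℝ≥0∞ := fun y => ENNReal.ofReal |g y| with hf1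
      set f2 : EuclideanSpace ℝ (Fin d) → ℝ≥0∞ := fun y => ENNReal.ofReal ‖fderiv ℝ g y‖
        with hf2
      have hsplit : ∀ y, G y = ENNReal.ofReal 2 * (f1 y * f2 y) := by
        intro y
        rw [hGdef, hf1, hf2]
        simp only
        rw [← ENNReal.ofReal_mul (abs_nonneg (g y)),
          ← ENNReal.ofReal_mul (by norm_num : (0:ℝ) ≤ 2)]
        congr 1
        ring
      have hCS := ENNReal.lintegral_mul_le_Lp_mul_Lq volume
        Real.HolderConjugate.two_two
        ((ENNReal.measurable_ofReal.comp hgm.abs).aemeasurable)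
        ((ENNReal.measurable_ofReal.comp hDm.norm).aemeasurable)
      have e1 : (∫⁻ y, f1 y ^ (2:ℝ)) = ENNReal.ofReal P := by
        rw [← hLP]
        apply lintegral_congr
        intro y
        rw [hf1]
        simp only
        rw [ENNReal.ofReal_rpow_of_nonneg (abs_nonneg _) (by norm_num)]
        congr 1
        rw [show (2:ℝ) = ((2:ℕ):ℝ) by norm_num, Real.rpow_natCast, sq_abs]
      have e2 : (∫⁻ y, f2 y ^ (2:ℝ)) = ENNReal.ofReal Q := by
        rw [← hLQ]
        apply lintegral_congr
        intro y
        rw [hf2]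
        simp only
        rw [ENNReal.ofReal_rpow_of_nonneg (norm_nonneg _) (by norm_num)]
        congr 1
        rw [show (2:ℝ) = ((2:ℕ):ℝ) by norm_num, Real.rpow_natCast]
      calc (∫⁻ y, G y) = ∫⁻ y, ENNReal.ofReal 2 * (f1 y * f2 y) := lintegral_congr hsplit
        _ = ENNReal.ofReal 2 * ∫⁻ y, (f1 * f2) y :=
            lintegral_const_mul' _ _ ENNReal.ofReal_ne_top
        _ ≤ ENNReal.ofReal 2 * ((∫⁻ y, f1 y ^ (2:ℝ)) ^ ((1:ℝ)/2) *
              (∫⁻ y, f2 y ^ (2:ℝ)) ^ ((1:ℝ)/2)) := by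
            exact mul_le_mul_right hCS _
        _ = ENNReal.ofReal 2 * (ENNReal.ofReal P ^ ((1:ℝ)/2) * ENNReal.ofReal Q ^ ((1:ℝ)/2)) := by
            rw [e1, e2]
    -- assemble
    have hsq : ∀ (R : ℝ), 0 ≤ R → ENNReal.ofReal R ^ ((1:ℝ)/2) = ENNReal.ofReal (Real.sqrt R) := by
      intro R hR
      rw [ENNReal.ofReal_rpow_of_nonneg hR (by norm_num), Real.sqrt_eq_rpow]
    calc (∫⁻ x in A, ENNReal.ofReal ((g x)^2))
        ≤ ∫⁻ x in A, ∫⁻ s in Ioi (1:ℝ),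
            ENNReal.ofReal (2 * |g (s • x)| * ‖fderiv ℝ g (s • x)‖ * ‖x‖) := step1
      _ = ∫⁻ x, ∫⁻ s in Ioi (1:ℝ),
            (if a ≤ ‖x‖ ∧ ‖x‖ ≤ b then
              ENNReal.ofReal (2 * |g (s • x)| * ‖fderiv ℝ g (s • x)‖ * ‖x‖) else 0) := step2
      _ = ∫⁻ s in Ioi (1:ℝ), ∫⁻ x,
            (if a ≤ ‖x‖ ∧ ‖x‖ ≤ b then
              ENNReal.ofReal (2 * |g (s • x)| * ‖fderiv ℝ g (s • x)‖ * ‖x‖) else 0) := step3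
      _ = ∫⁻ s in Ioi (1:ℝ), ENNReal.ofReal ((s^(d+1))⁻¹) * ∫⁻ y, T s y :=
            setLIntegral_congr_fun measurableSet_Ioi step4
      _ = ∫⁻ y, (G y * ENNReal.ofReal ‖y‖) * ∫⁻ s in Ioi (1:ℝ), K s y := step5
      _ ≤ ENNReal.ofReal (b - a) * ∫⁻ y, G y := step6
      _ ≤ ENNReal.ofReal (b - a) * (ENNReal.ofReal 2 *
            (ENNReal.ofReal P ^ ((1:ℝ)/2) * ENNReal.ofReal Q ^ ((1:ℝ)/2))) :=
            mul_le_mul_right step7 _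
      _ = ENNReal.ofReal (2 * (b - a) * Real.sqrt P * Real.sqrt Q) := by
            rw [hsq P hP0, hsq Q hQ0, ← ENNReal.ofReal_mul (Real.sqrt_nonneg P),
              ← ENNReal.ofReal_mul (by norm_num : (0:ℝ) ≤ 2),
              ← ENNReal.ofReal_mul (sub_nonneg.2 hab)]
            congr 1
            ring
  -- conclude
  have hnn : 0 ≤ᵐ[volume.restrict A] fun x : EuclideanSpace ℝ (Fin d) => (g x)^2 :=
    ae_of_all _ fun x => sq_nonneg _
  have heq : ∫ x in A, (g x)^2 = (∫⁻ x in A, ENNReal.ofReal ((g x)^2)).toReal :=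
    integral_eq_lintegral_of_nonneg_ae hnn ((hgm.pow_const 2).aestronglyMeasurable)
  rw [heq]
  apply ENNReal.toReal_le_of_le_ofReal ?_ claim
  have : 0 ≤ b - a := sub_nonneg.2 hab
  positivity

set_option maxHeartbeats 1000000 in
/-- For `v(x) = |x|²` on `ℝ^d` (`d ≥ 2`), for every `λ ∈ ℝ`, `δ > 0` and `g ∈ H¹(ℝ^d)`,
`∫_{E²_{λ,δ}} g² ≤ 2√2 δ ‖g‖‖∇g‖` and `∫_{ℰ²_{λ,δ}} g² ≤ 2(1+√3) δ ‖g‖‖∇g‖`,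
where `E²_{λ,δ} = {x : ||x|² - λ| < δ²}` and `ℰ²_{λ,δ}` is its open `δ`-neighborhood. -/
theorem stmt_16 (d : ℕ) (hd : 2 ≤ d) (lam δ : ℝ) (hδ : 0 < δ)
    (g : EuclideanSpace ℝ (Fin d) → ℝ)
    (hgdiff : Differentiable ℝ g) (hg2 : MemLp g 2 volume)
    (hg'2 : MemLp (fun x => ‖fderiv ℝ g x‖) 2 volume) :
    (∫ x in {x : EuclideanSpace ℝ (Fin d) | |‖x‖ ^ 2 - lam| < δ ^ 2}, (g x) ^ 2 ≤
        2 * Real.sqrt 2 * δ * Real.sqrt (∫ x, (g x) ^ 2) *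
          Real.sqrt (∫ x, ‖fderiv ℝ g x‖ ^ 2)) ∧
      (∫ x in Metric.thickening δ {x : EuclideanSpace ℝ (Fin d) | |‖x‖ ^ 2 - lam| < δ ^ 2},
          (g x) ^ 2 ≤
        2 * (1 + Real.sqrt 3) * δ * Real.sqrt (∫ x, (g x) ^ 2) *
          Real.sqrt (∫ x, ‖fderiv ℝ g x‖ ^ 2)) := by
  have hgm : Measurable g := hgdiff.continuous.measurable
  have hg2i : Integrable (fun x : EuclideanSpace ℝ (Fin d) => (g x)^2) := hg2.integrable_sq
  set P : ℝ := ∫ x, (g x)^2 with hPdef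
  set Q : ℝ := ∫ x, ‖fderiv ℝ g x‖^2 with hQdef
  have hsP : 0 ≤ Real.sqrt P := Real.sqrt_nonneg P
  have hsQ : 0 ≤ Real.sqrt Q := Real.sqrt_nonneg Q
  set E : Set (EuclideanSpace ℝ (Fin d)) := {x | |‖x‖ ^ 2 - lam| < δ ^ 2} with hEdef
  -- master estimate
  have master : ∀ a b : ℝ, 0 ≤ a → a ≤ b →
      ∀ S : Set (EuclideanSpace ℝ (Fin d)), S ⊆ {x | a ≤ ‖x‖ ∧ ‖x‖ ≤ b} →
      ∀ c : ℝ, b - a ≤ c →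
      ∫ x in S, (g x)^2 ≤ 2 * c * Real.sqrt P * Real.sqrt Q := by
    intro a b ha hab S hsub c hc
    have h1 : ∫ x in S, (g x)^2 ≤ ∫ x in {x | a ≤ ‖x‖ ∧ ‖x‖ ≤ b}, (g x)^2 :=
      setIntegral_mono_set hg2i.integrableOn (ae_of_all _ fun x => sq_nonneg _)
        (HasSubset.Subset.eventuallyLE hsub)
    have h2 := annulus_est hd ha hab hgdiff hg2 hg'2
    have h3 : 2 * (b - a) * Real.sqrt P * Real.sqrt Q ≤ 2 * c * Real.sqrt P * Real.sqrt Q := by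
      have : 2 * (b - a) ≤ 2 * c := by linarith
      nlinarith [mul_nonneg hsP hsQ]
    linarith
  -- the annulus containing E
  set a₁ : ℝ := Real.sqrt (lam - δ^2) with ha₁def
  set b₁ : ℝ := Real.sqrt (lam + δ^2) with hb₁def
  have ha₁ : 0 ≤ a₁ := Real.sqrt_nonneg _
  have hb₁ : 0 ≤ b₁ := Real.sqrt_nonneg _
  have hab₁ : a₁ ≤ b₁ := Real.sqrt_le_sqrt (by nlinarith)
  have hsubE : E ⊆ {x | a₁ ≤ ‖x‖ ∧ ‖x‖ ≤ b₁} := by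
    intro x hx
    have hx' : |‖x‖ ^ 2 - lam| < δ ^ 2 := hx
    rw [abs_lt] at hx'
    constructor
    · have : a₁ ≤ Real.sqrt (‖x‖^2) := Real.sqrt_le_sqrt (by linarith [hx'.1])
      rwa [Real.sqrt_sq (norm_nonneg x)] at this
    · have : Real.sqrt (‖x‖^2) ≤ b₁ := Real.sqrt_le_sqrt (by linarith [hx'.2])
      rwa [Real.sqrt_sq (norm_nonneg x)] at this
  have hs2 : Real.sqrt 2 ^ 2 = 2 := Real.sq_sqrt (by norm_num)
  have hs2' : (1:ℝ) ≤ Real.sqrt 2 := by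
    nlinarith [Real.sqrt_nonneg 2]
  have hwidth1 : b₁ - a₁ ≤ Real.sqrt 2 * δ := by
    have hkey : lam + δ^2 ≤ (Real.sqrt 2 * δ + a₁)^2 := by
      rcases le_or_gt (lam - δ^2) 0 with hc | hc
      · nlinarith [hs2, ha₁, hδ.le, sq_nonneg a₁,
          mul_nonneg (mul_nonneg (Real.sqrt_nonneg 2) hδ.le) ha₁]
      · have ha₁sq : a₁^2 = lam - δ^2 := Real.sq_sqrt hc.le
        nlinarith [hs2, ha₁, hδ.le,
          mul_nonneg (mul_nonneg (Real.sqrt_nonneg 2) hδ.le) ha₁]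
    have : b₁ ≤ Real.sqrt ((Real.sqrt 2 * δ + a₁)^2) := Real.sqrt_le_sqrt hkey
    rw [Real.sqrt_sq (by positivity)] at this
    linarith
  constructor
  · have := master a₁ b₁ ha₁ hab₁ E hsubE (Real.sqrt 2 * δ) hwidth1
    calc ∫ x in E, (g x)^2 ≤ 2 * (Real.sqrt 2 * δ) * Real.sqrt P * Real.sqrt Q := this
      _ = 2 * Real.sqrt 2 * δ * Real.sqrt P * Real.sqrt Q := by ring
  · -- thickening
    have htk : ∀ x ∈ Metric.thickening δ E, a₁ - δ ≤ ‖x‖ ∧ ‖x‖ ≤ b₁ + δ := by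
      intro x hx
      rw [Metric.mem_thickening_iff] at hx
      obtain ⟨z, hz, hdist⟩ := hx
      have hz' := hsubE hz
      have h1 : ‖x‖ - ‖z‖ ≤ ‖x - z‖ := norm_sub_norm_le x z
      have h2 : ‖z‖ - ‖x‖ ≤ ‖x - z‖ := by
        rw [norm_sub_rev]
        exact norm_sub_norm_le z x
      rw [← dist_eq_norm] at h1 h2
      exact ⟨by linarith [hz'.1], by linarith [hz'.2]⟩
    have hs3 : Real.sqrt 3 ^ 2 = 3 := Real.sq_sqrt (by norm_num)
    have hs3' : (1:ℝ) ≤ Real.sqrt 3 := by nlinarith [Real.sqrt_nonneg 3]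
    rcases le_or_gt lam (2*δ^2) with hcase | hcase
    · -- small lam : annulus (0, b₁ + δ)
      have hsub2 : Metric.thickening δ E ⊆ {x | 0 ≤ ‖x‖ ∧ ‖x‖ ≤ b₁ + δ} := by
        intro x hx
        exact ⟨norm_nonneg x, (htk x hx).2⟩
      have hwidth2 : (b₁ + δ) - 0 ≤ (1 + Real.sqrt 3) * δ := by
        have hb₁le : b₁ ≤ Real.sqrt 3 * δ := by
          have h1 : lam + δ^2 ≤ (Real.sqrt 3 * δ)^2 := by nlinarith
          have := Real.sqrt_le_sqrt h1
          rwa [Real.sqrt_sq (by positivity)] at this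
        linarith
      have := master 0 (b₁ + δ) le_rfl (by linarith) _ hsub2 ((1 + Real.sqrt 3) * δ)
        (by linarith [hwidth2])
      calc ∫ x in Metric.thickening δ E, (g x)^2
          ≤ 2 * ((1 + Real.sqrt 3) * δ) * Real.sqrt P * Real.sqrt Q := this
        _ = 2 * (1 + Real.sqrt 3) * δ * Real.sqrt P * Real.sqrt Q := by ring
    · -- large lam : annulus (a₁ - δ, b₁ + δ)
      have ha₁δ : δ ≤ a₁ := by
        have h1 : δ^2 ≤ lam - δ^2 := by linarith
        have := Real.sqrt_le_sqrt h1
        rwa [Real.sqrt_sq hδ.le] at this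
      have hsub2 : Metric.thickening δ E ⊆ {x | a₁ - δ ≤ ‖x‖ ∧ ‖x‖ ≤ b₁ + δ} := htk
      have hwidth2 : (b₁ + δ) - (a₁ - δ) ≤ (1 + Real.sqrt 3) * δ := by
        have hb₁a₁ : b₁ - a₁ ≤ (Real.sqrt 3 - 1) * δ := by
          have ha₁sq : a₁^2 = lam - δ^2 := Real.sq_sqrt (by nlinarith [sq_nonneg δ])
          have hkey : lam + δ^2 ≤ ((Real.sqrt 3 - 1) * δ + a₁)^2 := by
            nlinarith [hs3, ha₁sq, mul_nonneg (mul_nonneg (by linarith : (0:ℝ) ≤ Real.sqrt 3 - 1) hδ.le)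
              (by linarith : (0:ℝ) ≤ a₁ - δ)]
          have := Real.sqrt_le_sqrt hkey
          rw [Real.sqrt_sq (by nlinarith [hs3', hδ.le, ha₁])] at this
          linarith
        linarith
      have := master (a₁ - δ) (b₁ + δ) (by linarith) (by linarith) _ hsub2
        ((1 + Real.sqrt 3) * δ) (by linarith [hwidth2])
      calc ∫ x in Metric.thickening δ E, (g x)^2
          ≤ 2 * ((1 + Real.sqrt 3) * δ) * Real.sqrt P * Real.sqrt Q := this
        _ = 2 * (1 + Real.sqrt 3) * δ * Real.sqrt P * Real.sqrt Q := by ring
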